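/- Let d ≥ 1, r > 0, let w be a weight, let v : ℤ^d → ℂ^d be divergence-free and real with ‖w v‖_{ℓ¹} < ∞, and let a : ℤ^d → ℂ satisfy Σ_k (1+|k|)|a(k)| < ∞. Then the instantaneous advective flux through the sphere of radius r obeys: 2 Re Σ_{|k|≥r} conj(a(k)) · ( −2πi Σ_{j∈ℤ^d} (k·v(k−j)) a(j) ) ≤ 4πr · ‖w v‖_{ℓ¹} · Σ_{k∈ℤ^d} w(||k|−r|)^{−1} |a(k)|². -/

import Mathlib

open MeasureTheory ENNReal Real Set
open scoped Classical

noncomputable section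

/-- Euclidean norm of a lattice point `k ∈ ℤ^d`. -/
def znorm {d : ℕ} (k : Fin d → ℤ) : ℝ := Real.sqrt (∑ i, ((k i : ℝ)) ^ 2)

/-- Euclidean norm of a vector in `ℂ^d`. -/
def cnorm {d : ℕ} (z : Fin d → ℂ) : ℝ := Real.sqrt (∑ i, ‖z i‖ ^ 2)

/-- Pairing `k · z = Σ_i k_i z_i`. -/
def zdot {d : ℕ} (k : Fin d → ℤ) (z : Fin d → ℂ) : ℂ := ∑ i, (k i : ℂ) * z i

/-- Divergence-free in Fourier variables: `k · v(k) = 0` for all `k`. -/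
def DivFree {d : ℕ} (v : (Fin d → ℤ) → Fin d → ℂ) : Prop := ∀ k, zdot k (v k) = 0

/-- Fourier coefficients of a real vector field: `v(-k) = conj (v k)`. -/
def RealCoeff {d : ℕ} (v : (Fin d → ℤ) → Fin d → ℂ) : Prop :=
  ∀ k i, v (-k) i = starRingEnd ℂ (v k i)

/-- A weight: nondecreasing on `[0,∞)` with values in `[1,∞]`. -/
def IsWeight (w : ℝ → ℝ≥0∞) : Prop :=
  MonotoneOn w (Set.Ici 0) ∧ ∀ s, 0 ≤ s → 1 ≤ w s

/-- Weighted ℓ¹ norm `‖w v‖_{ℓ¹} = Σ_k w(|k|)|v(k)|`. -/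
def wl1 {d : ℕ} (w : ℝ → ℝ≥0∞) (v : (Fin d → ℤ) → Fin d → ℂ) : ℝ≥0∞ :=
  ∑' k, w (znorm k) * ENNReal.ofReal (cnorm (v k))

/-- `(w⁻¹ * m_a)(r) = Σ_k w(||k|-r|)⁻¹ |a(k)|²`. -/
def convMass {d : ℕ} (w : ℝ → ℝ≥0∞) (a : (Fin d → ℤ) → ℂ) (r : ℝ) : ℝ≥0∞ :=
  ∑' k, (w |znorm k - r|)⁻¹ * (‖a k‖₊ : ℝ≥0∞) ^ 2

/-- `m_a(E) = Σ_{|k| ∈ E} |a(k)|²`. -/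
def massOn {d : ℕ} (a : (Fin d → ℤ) → ℂ) (E : Set ℝ) : ℝ≥0∞ :=
  ∑' k, if znorm k ∈ E then (‖a k‖₊ : ℝ≥0∞) ^ 2 else 0

/-- Logarithmic density measure `μ_{a,b}(E)`. -/
def logDensity (a b : ℝ) (E : Set ℝ) : ℝ≥0∞ :=
  (ENNReal.ofReal (Real.log (b / a)))⁻¹ * ∫⁻ r in E ∩ Set.Icc a b, ENNReal.ofReal r⁻¹

/-- The right-hand side of the Fourier advection–diffusion system. -/
def fourierRHS {d : ℕ} (ν : ℝ) (v : (Fin d → ℤ) → Fin d → ℂ) (a : (Fin d → ℤ) → ℂ)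
    (k : Fin d → ℤ) : ℂ :=
  Complex.ofReal (-(4 * π ^ 2 * ν * znorm k ^ 2)) * a k
    - 2 * Complex.ofReal π * Complex.I * ∑' j, zdot k (v (k - j)) * a j


section aux
variable {d : ℕ}

lemma znorm_nonneg (k : Fin d → ℤ) : 0 ≤ znorm k := Real.sqrt_nonneg _
lemma cnorm_nonneg (z : Fin d → ℂ) : 0 ≤ cnorm z := Real.sqrt_nonneg _

lemma zdot_norm_le (k : Fin d → ℤ) (z : Fin d → ℂ) : ‖zdot k z‖ ≤ znorm k * cnorm z := by
  have h1 : ‖zdot k z‖ ≤ ∑ i, |(k i : ℝ)| * ‖z i‖ := by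
    refine (norm_sum_le _ _).trans (Finset.sum_le_sum fun i _ => ?_)
    rw [norm_mul]
    have : ‖((k i : ℤ) : ℂ)‖ = |(k i : ℝ)| := by
      rw [show ((k i : ℤ) : ℂ) = ((k i : ℝ) : ℂ) by push_cast; ring]
      exact (Complex.norm_real _).trans (Real.norm_eq_abs _)
    rw [this]
  refine h1.trans ?_
  have h2 := Finset.sum_mul_sq_le_sq_mul_sq Finset.univ (fun i => |(k i : ℝ)|) (fun i => ‖z i‖)
  simp only [sq_abs] at h2
  have h3 : (∑ i, |(k i : ℝ)| * ‖z i‖) ≤ Real.sqrt ((∑ i, ((k i : ℝ))^2) * ∑ i, ‖z i‖^2) := by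
    rw [show ((∑ i, ((k i : ℝ))^2) * ∑ i, ‖z i‖^2) = Real.sqrt (((∑ i, ((k i : ℝ))^2) * ∑ i, ‖z i‖^2))^2 from ?gg] at h2
    case gg =>
      rw [Real.sq_sqrt]
      positivity
    have hnn : 0 ≤ ∑ i, |(k i : ℝ)| * ‖z i‖ := by positivity
    nlinarith [Real.sqrt_nonneg ((∑ i, ((k i : ℝ))^2) * ∑ i, ‖z i‖^2)]
  refine h3.trans_eq ?_
  rw [znorm, cnorm, ← Real.sqrt_mul (by positivity)]

lemma znorm_eq_norm (k : Fin d → ℤ) :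
    znorm k = ‖(EuclideanSpace.equiv (Fin d) ℝ).symm (fun i => (k i : ℝ))‖ := by
  rw [EuclideanSpace.norm_eq]
  simp [znorm, Real.norm_eq_abs, sq_abs]

lemma abs_znorm_sub_le (k j : Fin d → ℤ) : |znorm k - znorm j| ≤ znorm (k - j) := by
  rw [znorm_eq_norm, znorm_eq_norm, znorm_eq_norm]
  have : (EuclideanSpace.equiv (Fin d) ℝ).symm (fun i => ((k - j) i : ℝ))
      = (EuclideanSpace.equiv (Fin d) ℝ).symm (fun i => (k i : ℝ))
        - (EuclideanSpace.equiv (Fin d) ℝ).symm (fun i => (j i : ℝ)) := by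
    ext i
    simp
  rw [this]
  exact abs_norm_sub_norm_le _ _

lemma zdot_add_left (k j : Fin d → ℤ) (z : Fin d → ℂ) :
    zdot (k + j) z = zdot k z + zdot j z := by
  simp only [zdot, Pi.add_apply, Int.cast_add, add_mul, Finset.sum_add_distrib]

lemma zdot_neg_left (k : Fin d → ℤ) (z : Fin d → ℂ) : zdot (-k) z = - zdot k z := by
  simp [zdot, neg_mul, Finset.sum_neg_distrib]

lemma conj_zdot (k : Fin d → ℤ) (z : Fin d → ℂ) :
    starRingEnd ℂ (zdot k z) = zdot k (fun i => starRingEnd ℂ (z i)) := by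
  simp [zdot, map_sum, map_mul]

/-- reduce `zdot k (v (k-j))` to `zdot j (v (k-j))` using divergence-freeness -/
lemma zdot_divfree {v : (Fin d → ℤ) → Fin d → ℂ} (hdiv : DivFree v) (k j : Fin d → ℤ) :
    zdot k (v (k - j)) = zdot j (v (k - j)) := by
  have : zdot k (v (k - j)) = zdot (k - j) (v (k - j)) + zdot j (v (k - j)) := by
    rw [← zdot_add_left, sub_add_cancel]
  rw [this, hdiv, zero_add]

end aux

set_option maxHeartbeats 2000000 in
/-- the instantaneous advective flux through the sphere of radius `r` is
bounded by the weighted ℓ¹ norm of the velocity times the convolved mass. -/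


theorem instantaneous_flux_bound {d : ℕ} (hd : 1 ≤ d) (r : ℝ) (hr : 0 < r)
    (w : ℝ → ℝ≥0∞) (hw : IsWeight w)
    (v : (Fin d → ℤ) → Fin d → ℂ) (hdiv : DivFree v) (hreal : RealCoeff v)
    (hv : wl1 w v ≠ ⊤)
    (a : (Fin d → ℤ) → ℂ) (ha : Summable fun k => (1 + znorm k) * ‖a k‖) :
    ENNReal.ofReal (2 * Complex.re (∑' k : Fin d → ℤ,
        if r ≤ znorm k then
          starRingEnd ℂ (a k) *
            (-(2 * Complex.ofReal π * Complex.I) * ∑' j : Fin d → ℤ, zdot k (v (k - j)) * a j)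
        else 0))
      ≤ ENNReal.ofReal (4 * π * r) * wl1 w v * convMass w a r := by
  classical
  set c : ℂ := -(2 * Complex.ofReal π * Complex.I) with hc
  -- basic summability facts
  have hsa : Summable (fun k : Fin d → ℤ => ‖a k‖) := by
    refine ha.of_nonneg_of_le (fun k => norm_nonneg _) (fun k => ?_)
    nlinarith [znorm_nonneg k, norm_nonneg (a k)]
  have hza : Summable (fun k : Fin d → ℤ => znorm k * ‖a k‖) := by
    refine ha.of_nonneg_of_le (fun k => mul_nonneg (znorm_nonneg k) (norm_nonneg _)) (fun k => ?_)
    nlinarith [znorm_nonneg k, norm_nonneg (a k)]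
  have hsv : Summable (fun k : Fin d → ℤ => cnorm (v k)) := by
    have h1 : (∑' k : Fin d → ℤ, ENNReal.ofReal (cnorm (v k))) ≠ ⊤ := by
      refine ne_top_of_le_ne_top hv (ENNReal.tsum_le_tsum fun k => ?_)
      calc ENNReal.ofReal (cnorm (v k)) = 1 * ENNReal.ofReal (cnorm (v k)) := (one_mul _).symm
        _ ≤ w (znorm k) * ENNReal.ofReal (cnorm (v k)) :=
          mul_le_mul_left (hw.2 _ (znorm_nonneg k)) _
    have := ENNReal.summable_toReal h1
    refine this.congr fun k => ?_
    exact ENNReal.toReal_ofReal (cnorm_nonneg _)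
  set Ca : ℝ := ∑' k : Fin d → ℤ, ‖a k‖ with hCadef
  have hCa : ∀ j, ‖a j‖ ≤ Ca := fun j => Summable.le_tsum hsa j (fun _ _ => norm_nonneg _)
  -- the double-indexed summand
  set g : ((Fin d → ℤ) × (Fin d → ℤ)) → ℂ := fun p =>
    if r ≤ znorm p.1 then starRingEnd ℂ (a p.1) * (zdot p.1 (v (p.1 - p.2)) * a p.2) else 0
    with hg
  have hgbound : ∀ p : (Fin d → ℤ) × (Fin d → ℤ),
      ‖g p‖ ≤ (znorm p.1 * ‖a p.1‖) * (cnorm (v (p.1 - p.2)) * Ca) := by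
    rintro ⟨k, j⟩
    by_cases hk : r ≤ znorm k
    · simp only [hg, if_pos hk]
      rw [norm_mul, norm_mul, RCLike.norm_conj]
      calc ‖a k‖ * (‖zdot k (v (k - j))‖ * ‖a j‖)
          ≤ ‖a k‖ * ((znorm k * cnorm (v (k - j))) * Ca) := by
            refine mul_le_mul_of_nonneg_left ?_ (norm_nonneg (a k))
            exact mul_le_mul (zdot_norm_le k (v (k - j))) (hCa j) (norm_nonneg _)
              (mul_nonneg (znorm_nonneg k) (cnorm_nonneg _))
        _ = (znorm k * ‖a k‖) * (cnorm (v (k - j)) * Ca) := by ring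
    · simp only [hg, if_neg hk, norm_zero]
      have h2 : (0:ℝ) ≤ Ca := (norm_nonneg (a j)).trans (hCa j)
      exact mul_nonneg (mul_nonneg (znorm_nonneg k) (norm_nonneg _))
        (mul_nonneg (cnorm_nonneg _) h2)
  have hprodsum : Summable (fun p : (Fin d → ℤ) × (Fin d → ℤ) =>
      (znorm p.1 * ‖a p.1‖) * (cnorm (v (p.1 - p.2)) * Ca)) := by
    have hmul : Summable (fun p : (Fin d → ℤ) × (Fin d → ℤ) =>
        (znorm p.1 * ‖a p.1‖) * (cnorm (v p.2) * Ca)) := by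
      have := hza.mul_of_nonneg ((hsv.mul_right Ca))
        (fun k => mul_nonneg (znorm_nonneg k) (norm_nonneg _))
        (fun k => mul_nonneg (cnorm_nonneg _) (le_trans (norm_nonneg (a (0 : Fin d → ℤ))) (hCa _)))
      exact this
    let e : ((Fin d → ℤ) × (Fin d → ℤ)) ≃ ((Fin d → ℤ) × (Fin d → ℤ)) :=
      ⟨fun p => (p.1, p.1 - p.2), fun p => (p.1, p.1 - p.2),
        fun p => by simp, fun p => by simp⟩
    have := (e.summable_iff (f := fun p : (Fin d → ℤ) × (Fin d → ℤ) =>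
      (znorm p.1 * ‖a p.1‖) * (cnorm (v (p.1 - p.2)) * Ca))).mpr
    refine (e.summable_iff).mp ?_
    refine hmul.congr fun p => ?_
    show (znorm p.1 * ‖a p.1‖) * (cnorm (v p.2) * Ca)
        = (znorm (e p).1 * ‖a (e p).1‖) * (cnorm (v ((e p).1 - (e p).2)) * Ca)
    simp [e]
  have hgnorm : Summable (fun p : (Fin d → ℤ) × (Fin d → ℤ) => ‖g p‖) :=
    hprodsum.of_nonneg_of_le (fun p => norm_nonneg _) hgbound
  have hgsum : Summable g := hgnorm.of_norm
  have hgrow : ∀ k, Summable (fun j => g (k, j)) := by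
    intro k
    have h1 : Summable (fun j : Fin d → ℤ => cnorm (v (k - j))) := by
      have := (Equiv.subLeft k).summable_iff (f := fun m : Fin d → ℤ => cnorm (v m))
      exact this.mpr hsv
    refine Summable.of_norm_bounded (g := fun j => (znorm k * ‖a k‖ * Ca) * cnorm (v (k - j)))
      (h1.mul_left _) (fun j => ?_)
    calc ‖g (k, j)‖ ≤ (znorm k * ‖a k‖) * (cnorm (v (k - j)) * Ca) := hgbound (k, j)
      _ = znorm k * ‖a k‖ * Ca * cnorm (v (k - j)) := by ring
  -- rewrite the LHS as c * (double tsum)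
  have hFk : ∀ k : Fin d → ℤ,
      (if r ≤ znorm k then starRingEnd ℂ (a k) *
          (c * ∑' j : Fin d → ℤ, zdot k (v (k - j)) * a j) else 0)
        = c * ∑' j, g (k, j) := by
    intro k
    by_cases hk : r ≤ znorm k
    · simp only [hg, if_pos hk]
      rw [tsum_mul_left]
      ring
    · simp only [hg, if_neg hk, tsum_zero, mul_zero]
  have hLHS : (∑' k : Fin d → ℤ, if r ≤ znorm k then starRingEnd ℂ (a k) *
        (c * ∑' j : Fin d → ℤ, zdot k (v (k - j)) * a j) else 0)
      = c * ∑' p : (Fin d → ℤ) × (Fin d → ℤ), g p := by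
    rw [tsum_congr hFk, tsum_mul_left, ← Summable.tsum_prod' hgsum hgrow]
  -- split g into "both high" and "boundary" parts
  set gin : ((Fin d → ℤ) × (Fin d → ℤ)) → ℂ := fun p => if r ≤ znorm p.2 then g p else 0
    with hgin
  set gout : ((Fin d → ℤ) × (Fin d → ℤ)) → ℂ := fun p => if r ≤ znorm p.2 then 0 else g p
    with hgout
  have hsplit : ∀ p, g p = gin p + gout p := by
    intro p; by_cases hp : r ≤ znorm p.2 <;> simp [hgin, hgout, hp]
  have hginnorm : Summable (fun p => ‖gin p‖) :=
    hgnorm.of_nonneg_of_le (fun p => norm_nonneg _)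
      (fun p => by by_cases hp : r ≤ znorm p.2 <;> simp [hgin, hp, norm_nonneg])
  have hgoutnorm : Summable (fun p => ‖gout p‖) :=
    hgnorm.of_nonneg_of_le (fun p => norm_nonneg _)
      (fun p => by by_cases hp : r ≤ znorm p.2 <;> simp [hgout, hp, norm_nonneg])
  have hginsum : Summable gin := hginnorm.of_norm
  have hgoutsum : Summable gout := hgoutnorm.of_norm
  have htsum_split : (∑' p, g p) = (∑' p, gin p) + (∑' p, gout p) := by
    calc (∑' p, g p) = ∑' p, (gin p + gout p) := tsum_congr hsplit
      _ = (∑' p, gin p) + (∑' p, gout p) := Summable.tsum_add hginsum hgoutsum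
  -- the "both high" part is real
  have hkey : ∀ p : (Fin d → ℤ) × (Fin d → ℤ), starRingEnd ℂ (gin p) = gin (p.2, p.1) := by
    rintro ⟨k, j⟩
    by_cases hk : r ≤ znorm k <;> by_cases hj : r ≤ znorm j
    · simp only [hgin, hg, if_pos hk, if_pos hj]
      have h1 : starRingEnd ℂ (zdot k (v (k - j))) = zdot j (v (j - k)) := by
        rw [conj_zdot]
        have hcv : (fun i => starRingEnd ℂ (v (k - j) i)) = v (j - k) := by
          funext i
          rw [show j - k = -(k - j) from (neg_sub k j).symm, hreal]
        rw [hcv]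
        exact (zdot_divfree hdiv j k).symm
      rw [map_mul, map_mul, h1, Complex.conj_conj]
      ring
    · simp [hgin, hg, hk, hj]
    · simp [hgin, hg, hk, hj]
    · simp [hgin, hg, hk, hj]
  have hconjBin : starRingEnd ℂ (∑' p, gin p) = ∑' p, gin p := by
    calc starRingEnd ℂ (∑' p : (Fin d → ℤ) × (Fin d → ℤ), gin p)
        = ∑' p : (Fin d → ℤ) × (Fin d → ℤ), starRingEnd ℂ (gin p) := Complex.conj_tsum gin
      _ = ∑' p : (Fin d → ℤ) × (Fin d → ℤ), gin (p.2, p.1) := tsum_congr hkey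
      _ = ∑' p : (Fin d → ℤ) × (Fin d → ℤ), gin p := by
          have h := (Equiv.prodComm (Fin d → ℤ) (Fin d → ℤ)).tsum_eq gin
          rw [← h]
          exact tsum_congr fun p => rfl
  have him : (∑' p, gin p).im = 0 := Complex.conj_eq_iff_im.mp hconjBin
  have hcre : c.re = 0 := by simp [hc]
  have habs : ‖c‖ = 2 * π := by
    rw [hc, norm_neg, norm_mul, norm_mul, Complex.norm_I, mul_one]
    simp [Complex.norm_real, abs_of_nonneg Real.pi_nonneg]
  have hre : 2 * Complex.re (c * ((∑' p, gin p) + (∑' p, gout p)))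
      ≤ 4 * π * ∑' p, ‖gout p‖ := by
    have h0 : (c * (∑' p, gin p)).re = 0 := by
      rw [Complex.mul_re, hcre, him]; ring
    have h1 : (c * ((∑' p, gin p) + (∑' p, gout p))).re = (c * (∑' p, gout p)).re := by
      rw [mul_add, Complex.add_re, h0, zero_add]
    rw [h1]
    have h2 : (c * (∑' p, gout p)).re ≤ ‖c * (∑' p, gout p)‖ := by
      exact Complex.re_le_norm _
    have h3 : ‖c * (∑' p, gout p)‖ ≤ (2 * π) * ∑' p, ‖gout p‖ := by
      rw [norm_mul, habs]
      exact mul_le_mul_of_nonneg_left (norm_tsum_le_tsum_norm hgoutnorm) (by positivity)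
    nlinarith
  -- ENNReal side quantities
  set W : (Fin d → ℤ) → ℝ≥0∞ := fun m => w (znorm m) * ENNReal.ofReal (cnorm (v m)) with hW
  set M : (Fin d → ℤ) → ℝ≥0∞ := fun k => (w |znorm k - r|)⁻¹ * (‖a k‖₊ : ℝ≥0∞) ^ 2 with hM
  have hWsum : (∑' m, W m) = wl1 w v := rfl
  have hMsum : (∑' k, M k) = convMass w a r := rfl
  -- termwise bound
  have hterm : ∀ p : (Fin d → ℤ) × (Fin d → ℤ),
      ENNReal.ofReal ‖gout p‖ ≤ ENNReal.ofReal r * W (p.1 - p.2) * (2⁻¹ * (M p.1 + M p.2)) := by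
    rintro ⟨k, j⟩
    by_cases hj : r ≤ znorm j
    · simp [hgout, hj]
    by_cases hk : r ≤ znorm k
    swap
    · simp [hgout, hg, hj, hk]
    simp only [hgout, hg, if_neg hj, if_pos hk]
    by_cases hcv : cnorm (v (k - j)) = 0
    · have hz : ‖zdot k (v (k - j))‖ = 0 := by
        have h2 := zdot_norm_le k (v (k - j))
        have h5 := norm_nonneg (zdot k (v (k - j)))
        rw [hcv, mul_zero] at h2
        linarith
      rw [norm_mul, norm_mul, hz, zero_mul, mul_zero, ENNReal.ofReal_zero]
      exact zero_le
    · have hcvpos : 0 < cnorm (v (k - j)) := lt_of_le_of_ne (cnorm_nonneg _) (Ne.symm hcv)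
      have hwm_ne_top : w (znorm (k - j)) ≠ ⊤ := by
        intro htop
        apply hv
        have hle : W (k - j) ≤ wl1 w v := hWsum ▸ ENNReal.le_tsum (k - j)
        have hWtop : W (k - j) = ⊤ := by
          show w (znorm (k - j)) * ENNReal.ofReal (cnorm (v (k - j))) = ⊤
          rw [htop, ENNReal.top_mul ((ENNReal.ofReal_pos.mpr hcvpos).ne')]
        exact top_le_iff.mp (hWtop ▸ hle)
      have hjr : znorm j < r := lt_of_not_ge hj
      have habs_k : |znorm k - r| ≤ znorm (k - j) := by
        have h := abs_znorm_sub_le k j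
        rw [abs_of_nonneg (by linarith : (0:ℝ) ≤ znorm k - r)]
        have h2 : znorm k - znorm j ≤ |znorm k - znorm j| := le_abs_self _
        linarith
      have habs_j : |znorm j - r| ≤ znorm (k - j) := by
        have h := abs_znorm_sub_le k j
        rw [abs_of_nonpos (by linarith : znorm j - r ≤ 0)]
        have h2 : znorm k - znorm j ≤ |znorm k - znorm j| := le_abs_self _
        linarith
      have hwk_le : w |znorm k - r| ≤ w (znorm (k - j)) :=
        hw.1 (Set.mem_Ici.mpr (abs_nonneg _)) (Set.mem_Ici.mpr ((abs_nonneg _).trans habs_k)) habs_k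
      have hwj_le : w |znorm j - r| ≤ w (znorm (k - j)) :=
        hw.1 (Set.mem_Ici.mpr (abs_nonneg _)) (Set.mem_Ici.mpr ((abs_nonneg _).trans habs_j)) habs_j
      have hwk1 : 1 ≤ w |znorm k - r| := hw.2 _ (abs_nonneg _)
      have hwj1 : 1 ≤ w |znorm j - r| := hw.2 _ (abs_nonneg _)
      have hwk_ne_top : w |znorm k - r| ≠ ⊤ := ne_top_of_le_ne_top hwm_ne_top hwk_le
      have hwj_ne_top : w |znorm j - r| ≠ ⊤ := ne_top_of_le_ne_top hwm_ne_top hwj_le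
      have hwk_ne_zero : w |znorm k - r| ≠ 0 := by
        intro h; rw [h] at hwk1; simpa using hwk1
      have hwj_ne_zero : w |znorm j - r| ≠ 0 := by
        intro h; rw [h] at hwj1; simpa using hwj1
      have hone_k : (1:ℝ≥0∞) ≤ (w |znorm k - r|)⁻¹ * w (znorm (k - j)) := by
        rw [← ENNReal.inv_mul_cancel hwk_ne_zero hwk_ne_top]
        exact mul_le_mul_right hwk_le _
      have hone_j : (1:ℝ≥0∞) ≤ (w |znorm j - r|)⁻¹ * w (znorm (k - j)) := by
        rw [← ENNReal.inv_mul_cancel hwj_ne_zero hwj_ne_top]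
        exact mul_le_mul_right hwj_le _
      have hreal1 : ‖starRingEnd ℂ (a k) * (zdot k (v (k - j)) * a j)‖
          ≤ r * cnorm (v (k - j)) * (‖a k‖ * ‖a j‖) := by
        rw [norm_mul, norm_mul, RCLike.norm_conj]
        have hzd : ‖zdot k (v (k - j))‖ ≤ r * cnorm (v (k - j)) := by
          rw [zdot_divfree hdiv k j]
          refine (zdot_norm_le j (v (k - j))).trans ?_
          exact mul_le_mul_of_nonneg_right hjr.le (cnorm_nonneg _)
        calc ‖a k‖ * (‖zdot k (v (k - j))‖ * ‖a j‖)
            ≤ ‖a k‖ * ((r * cnorm (v (k - j))) * ‖a j‖) :=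
              mul_le_mul_of_nonneg_left
                (mul_le_mul_of_nonneg_right hzd (norm_nonneg _)) (norm_nonneg _)
          _ = r * cnorm (v (k - j)) * (‖a k‖ * ‖a j‖) := by ring
      refine (ENNReal.ofReal_le_ofReal hreal1).trans ?_
      rw [ENNReal.ofReal_mul (mul_nonneg hr.le (cnorm_nonneg _)),
          ENNReal.ofReal_mul hr.le, ENNReal.ofReal_mul (norm_nonneg _),
          ← coe_nnnorm (a k), ← coe_nnnorm (a j), ENNReal.ofReal_coe_nnreal, ENNReal.ofReal_coe_nnreal]
      have hamgm : (‖a k‖₊ : ℝ≥0∞) * ‖a j‖₊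
          ≤ 2⁻¹ * ((‖a k‖₊ : ℝ≥0∞) ^ 2 + (‖a j‖₊ : ℝ≥0∞) ^ 2) := by
        have hrr : (‖a k‖₊ : ℝ≥0∞) * ‖a j‖₊ * 2 ≤ (‖a k‖₊ : ℝ≥0∞) ^ 2 + (‖a j‖₊ : ℝ≥0∞) ^ 2 := by
          have hx : ‖a k‖₊ * ‖a j‖₊ * 2 ≤ ‖a k‖₊ ^ 2 + ‖a j‖₊ ^ 2 := by
            rw [← NNReal.coe_le_coe]
            push_cast
            nlinarith [norm_nonneg (a k), norm_nonneg (a j), sq_nonneg (‖a k‖ - ‖a j‖)]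
          calc (‖a k‖₊ : ℝ≥0∞) * ‖a j‖₊ * 2 = ((‖a k‖₊ * ‖a j‖₊ * 2 : NNReal) : ℝ≥0∞) := by
                push_cast; ring
            _ ≤ ((‖a k‖₊ ^ 2 + ‖a j‖₊ ^ 2 : NNReal) : ℝ≥0∞) := ENNReal.coe_le_coe.mpr hx
            _ = (‖a k‖₊ : ℝ≥0∞) ^ 2 + (‖a j‖₊ : ℝ≥0∞) ^ 2 := by push_cast; ring
        calc (‖a k‖₊ : ℝ≥0∞) * ‖a j‖₊ = 2⁻¹ * ((‖a k‖₊ : ℝ≥0∞) * ‖a j‖₊ * 2) := by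
              rw [mul_comm ((‖a k‖₊ : ℝ≥0∞) * ‖a j‖₊) 2, ← mul_assoc,
                ENNReal.inv_mul_cancel two_ne_zero ENNReal.ofNat_ne_top, one_mul]
          _ ≤ 2⁻¹ * ((‖a k‖₊ : ℝ≥0∞) ^ 2 + (‖a j‖₊ : ℝ≥0∞) ^ 2) := mul_le_mul_right hrr _
      have hmid : 2⁻¹ * ((‖a k‖₊ : ℝ≥0∞) ^ 2 + (‖a j‖₊ : ℝ≥0∞) ^ 2)
          ≤ w (znorm (k - j)) * (2⁻¹ * (M k + M j)) := by
        have h1 : ((‖a k‖₊ : ℝ≥0∞)) ^ 2 ≤ ((w |znorm k - r|)⁻¹ * w (znorm (k - j))) * (‖a k‖₊ : ℝ≥0∞) ^ 2 := by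
          nth_rewrite 1 [← one_mul ((‖a k‖₊ : ℝ≥0∞) ^ 2)]
          exact mul_le_mul_left hone_k _
        have h2 : ((‖a j‖₊ : ℝ≥0∞)) ^ 2 ≤ ((w |znorm j - r|)⁻¹ * w (znorm (k - j))) * (‖a j‖₊ : ℝ≥0∞) ^ 2 := by
          nth_rewrite 1 [← one_mul ((‖a j‖₊ : ℝ≥0∞) ^ 2)]
          exact mul_le_mul_left hone_j _
        calc 2⁻¹ * ((‖a k‖₊ : ℝ≥0∞) ^ 2 + (‖a j‖₊ : ℝ≥0∞) ^ 2)
            ≤ 2⁻¹ * (((w |znorm k - r|)⁻¹ * w (znorm (k - j))) * (‖a k‖₊ : ℝ≥0∞) ^ 2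
                + ((w |znorm j - r|)⁻¹ * w (znorm (k - j))) * (‖a j‖₊ : ℝ≥0∞) ^ 2) :=
              mul_le_mul_right (add_le_add h1 h2) _
          _ = w (znorm (k - j)) * (2⁻¹ * (M k + M j)) := by
              show _ = w (znorm (k - j)) * (2⁻¹ *
                ((w |znorm k - r|)⁻¹ * (‖a k‖₊ : ℝ≥0∞) ^ 2
                  + (w |znorm j - r|)⁻¹ * (‖a j‖₊ : ℝ≥0∞) ^ 2))
              ring
      calc ENNReal.ofReal r * ENNReal.ofReal (cnorm (v (k - j))) * ((‖a k‖₊ : ℝ≥0∞) * ‖a j‖₊)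
          ≤ ENNReal.ofReal r * ENNReal.ofReal (cnorm (v (k - j)))
              * (w (znorm (k - j)) * (2⁻¹ * (M k + M j))) :=
            mul_le_mul_right (hamgm.trans hmid) _
        _ = ENNReal.ofReal r * W (k - j) * (2⁻¹ * (M k + M j)) := by
            show _ = ENNReal.ofReal r
              * (w (znorm (k - j)) * ENNReal.ofReal (cnorm (v (k - j)))) * (2⁻¹ * (M k + M j))
            ring
  -- summing the bound
  have hsum1 : ∀ k : Fin d → ℤ, (∑' j : Fin d → ℤ, W (k - j)) = wl1 w v := by
    intro k
    rw [← hWsum]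
    simpa using (Equiv.subLeft k).tsum_eq W
  have hsum2 : ∀ j : Fin d → ℤ, (∑' k : Fin d → ℤ, W (k - j)) = wl1 w v := by
    intro j
    rw [← hWsum]
    simpa using (Equiv.subRight j).tsum_eq W
  have hS1 : (∑' p : (Fin d → ℤ) × (Fin d → ℤ), W (p.1 - p.2) * M p.1)
      = wl1 w v * convMass w a r := by
    rw [ENNReal.tsum_prod' (f := fun p => W (p.1 - p.2) * M p.1)]
    calc (∑' k, ∑' j, W (k - j) * M k) = ∑' k : Fin d → ℤ, (∑' j : Fin d → ℤ, W (k - j)) * M k := by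
          refine tsum_congr fun k => ?_
          rw [ENNReal.tsum_mul_right]
      _ = ∑' k : Fin d → ℤ, wl1 w v * M k := by
          refine tsum_congr fun k => ?_
          rw [hsum1]
      _ = wl1 w v * ∑' k, M k := ENNReal.tsum_mul_left
      _ = wl1 w v * convMass w a r := by rw [hMsum]
  have hS2 : (∑' p : (Fin d → ℤ) × (Fin d → ℤ), W (p.1 - p.2) * M p.2)
      = wl1 w v * convMass w a r := by
    rw [ENNReal.tsum_prod' (f := fun p => W (p.1 - p.2) * M p.2), ENNReal.tsum_comm]
    calc (∑' j, ∑' k, W (k - j) * M j) = ∑' j : Fin d → ℤ, (∑' k : Fin d → ℤ, W (k - j)) * M j := by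
          refine tsum_congr fun j => ?_
          rw [ENNReal.tsum_mul_right]
      _ = ∑' j : Fin d → ℤ, wl1 w v * M j := by
          refine tsum_congr fun j => ?_
          rw [hsum2]
      _ = wl1 w v * ∑' j, M j := ENNReal.tsum_mul_left
      _ = wl1 w v * convMass w a r := by rw [hMsum]
  have hUsum : (∑' p : (Fin d → ℤ) × (Fin d → ℤ),
        ENNReal.ofReal r * W (p.1 - p.2) * (2⁻¹ * (M p.1 + M p.2)))
      = ENNReal.ofReal r * (wl1 w v * convMass w a r) := by
    calc (∑' p : (Fin d → ℤ) × (Fin d → ℤ),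
          ENNReal.ofReal r * W (p.1 - p.2) * (2⁻¹ * (M p.1 + M p.2)))
        = ∑' p : (Fin d → ℤ) × (Fin d → ℤ), (ENNReal.ofReal r * 2⁻¹)
            * (W (p.1 - p.2) * M p.1 + W (p.1 - p.2) * M p.2) := by
          refine tsum_congr fun p => by ring
      _ = (ENNReal.ofReal r * 2⁻¹) * ∑' p : (Fin d → ℤ) × (Fin d → ℤ),
            (W (p.1 - p.2) * M p.1 + W (p.1 - p.2) * M p.2) := ENNReal.tsum_mul_left
      _ = (ENNReal.ofReal r * 2⁻¹) * ((∑' p : (Fin d → ℤ) × (Fin d → ℤ), W (p.1 - p.2) * M p.1)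
            + ∑' p : (Fin d → ℤ) × (Fin d → ℤ), W (p.1 - p.2) * M p.2) := by
          rw [ENNReal.tsum_add]
      _ = (ENNReal.ofReal r * 2⁻¹) * (2 * (wl1 w v * convMass w a r)) := by
          rw [hS1, hS2, two_mul]
      _ = ENNReal.ofReal r * (2⁻¹ * 2) * (wl1 w v * convMass w a r) := by ring
      _ = ENNReal.ofReal r * (wl1 w v * convMass w a r) := by
          rw [ENNReal.inv_mul_cancel two_ne_zero ENNReal.ofNat_ne_top, mul_one]
  -- final assembly
  rw [hLHS, htsum_split]
  calc ENNReal.ofReal (2 * (c * ((∑' p, gin p) + (∑' p, gout p))).re)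
      ≤ ENNReal.ofReal (4 * π * ∑' p, ‖gout p‖) := ENNReal.ofReal_le_ofReal hre
    _ = ENNReal.ofReal (4 * π) * ∑' p, ENNReal.ofReal ‖gout p‖ := by
        rw [ENNReal.ofReal_mul (by positivity),
          ENNReal.ofReal_tsum_of_nonneg (fun p => norm_nonneg _) hgoutnorm]
    _ ≤ ENNReal.ofReal (4 * π) * ∑' p : (Fin d → ℤ) × (Fin d → ℤ),
          (ENNReal.ofReal r * W (p.1 - p.2) * (2⁻¹ * (M p.1 + M p.2))) :=
        mul_le_mul_right (ENNReal.tsum_le_tsum hterm) _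
    _ = ENNReal.ofReal (4 * π) * (ENNReal.ofReal r * (wl1 w v * convMass w a r)) := by
        rw [hUsum]
    _ = ENNReal.ofReal (4 * π * r) * wl1 w v * convMass w a r := by
        rw [show ENNReal.ofReal (4 * π) * (ENNReal.ofReal r * (wl1 w v * convMass w a r))
            = (ENNReal.ofReal (4 * π) * ENNReal.ofReal r) * (wl1 w v * convMass w a r) by ring,
          ← ENNReal.ofReal_mul (by positivity : (0:ℝ) ≤ 4 * π), ← mul_assoc]
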